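/- Let 𝒜 : [1,∞) → [0,∞) be a strictly increasing continuously differentiable bijection with 𝒜(1) = 0, with inverse 𝒜⁻¹ : [0,∞) → [1,∞), and define P(t) = t²/𝒜⁻¹(log(t²)) for t ≥ 1. Then the integral ∫₁^∞ P(t)/t³ dt is infinite if and only if the integral ∫₁^∞ 𝒜(t)/t² dt is infinite. -/

import Mathlib

open MeasureTheory

/-- One-dimensional change of variables for the Lebesgue integral. -/
lemma my_lintegral_image_eq {s : Set ℝ} {f f' : ℝ → ℝ}
    (hs : MeasurableSet s) (hf' : ∀ x ∈ s, HasDerivWithinAt f (f' x) s x)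
    (hf : Set.InjOn f s) (g : ℝ → ENNReal) :
    ∫⁻ x in f '' s, g x = ∫⁻ x in s, ENNReal.ofReal |f' x| * g (f x) := by
  simpa only [ContinuousLinearMap.det_toSpanSingleton] using
    lintegral_image_eq_lintegral_abs_det_fderiv_mul volume hs
      (fun x hx => (hf' x hx).hasFDerivWithinAt) hf g

lemma my_lint_inv_sq {a : ℝ} (ha : 0 < a) :
    ∫⁻ t in Set.Ici a, ENNReal.ofReal (1 / t ^ 2) = ENNReal.ofReal (1 / a) := by
  rw [← Measure.restrict_congr_set Ioi_ae_eq_Ici]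
  have hconv : ∀ t : ℝ, t ∈ Set.Ioi a → t ^ (-2 : ℝ) = 1 / t ^ 2 := by
    intro t ht
    have ht0 : (0:ℝ) < t := ha.trans ht
    rw [Real.rpow_neg ht0.le, show (2:ℝ) = ((2:ℕ):ℝ) by norm_num, Real.rpow_natCast,
      one_div]
  have hint : IntegrableOn (fun t : ℝ => 1 / t ^ 2) (Set.Ioi a) := by
    exact (integrableOn_Ioi_rpow_of_lt (by norm_num : (-2:ℝ) < -1) ha).congr_fun
      hconv measurableSet_Ioi
  rw [← ofReal_integral_eq_lintegral_ofReal hint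
    (Filter.Eventually.of_forall fun t => by positivity)]
  congr 1
  have h1 : ∫ t in Set.Ioi a, (1 / t ^ 2 : ℝ) = ∫ t in Set.Ioi a, t ^ (-2 : ℝ) :=
    setIntegral_congr_fun measurableSet_Ioi fun t ht => (hconv t ht).symm
  rw [h1, integral_Ioi_rpow_of_lt (by norm_num) ha]
  rw [show (-2 : ℝ) + 1 = -1 by norm_num, Real.rpow_neg_one]
  field_simp

theorem almost_linear_iff_almost_quadratic
    (𝒜 B : ℝ → ℝ)
    (h𝒜mono : StrictMonoOn 𝒜 (Set.Ici 1))
    (h𝒜smooth : ContDiffOn ℝ 1 𝒜 (Set.Ici 1))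
    (h𝒜bij : Set.BijOn 𝒜 (Set.Ici 1) (Set.Ici 0))
    (h𝒜1 : 𝒜 1 = 0)
    (hBinv : Set.InvOn B 𝒜 (Set.Ici 1) (Set.Ici 0))
    (P : ℝ → ℝ)
    (hPge : ∀ t : ℝ, 1 ≤ t → P t = t ^ 2 / B (Real.log (t ^ 2))) :
    (∫⁻ t in Set.Ici (1 : ℝ), ENNReal.ofReal (P t / t ^ 3) = ⊤)
      ↔ (∫⁻ t in Set.Ici (1 : ℝ), ENNReal.ofReal (𝒜 t / t ^ 2) = ⊤) := by
  -- Basic facts about B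
  have hBfact : ∀ u : ℝ, 0 ≤ u → 1 ≤ B u ∧ 𝒜 (B u) = u := by
    intro u hu
    obtain ⟨x, hx, hxu⟩ := h𝒜bij.surjOn hu
    have hBx : B u = x := by rw [← hxu, hBinv.1 hx]
    exact ⟨hBx ▸ hx, by rw [hBx, hxu]⟩
  have hA0 : ∀ t : ℝ, 1 ≤ t → 0 ≤ 𝒜 t := fun t ht => h𝒜bij.mapsTo ht
  have hkey : ∀ u : ℝ, 0 ≤ u → ∀ t : ℝ, 1 ≤ t → (u ≤ 𝒜 t ↔ B u ≤ t) := by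
    intro u hu t ht
    obtain ⟨hB1, hBA⟩ := hBfact u hu
    constructor
    · intro h
      by_contra hc
      push_neg at hc
      have h2 := h𝒜mono ht hB1 hc
      rw [hBA] at h2; linarith
    · intro h
      have h2 := h𝒜mono.monotoneOn hB1 ht h
      rwa [hBA] at h2
  -- continuous extension of 𝒜
  set A : ℝ → ℝ := fun t => 𝒜 (max t 1) with hA
  have hAc : Continuous A := by
    apply h𝒜smooth.continuousOn.comp_continuous (continuous_id.max continuous_const)
    intro x; exact Set.mem_Ici.2 (le_max_right _ _)
  have hAeq : ∀ t : ℝ, 1 ≤ t → A t = 𝒜 t := fun t ht => by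
    simp [hA, max_eq_left ht]
  -- Step A : substitution t = exp(u/2)
  have stepA : (∫⁻ t in Set.Ici (1:ℝ), ENNReal.ofReal (P t / t ^ 3))
      = ENNReal.ofReal (1/2) * ∫⁻ u in Set.Ici (0:ℝ), ENNReal.ofReal (1 / B u) := by
    have himg : (fun u : ℝ => Real.exp (u/2)) '' Set.Ici (0:ℝ) = Set.Ici (1:ℝ) := by
      ext t
      constructor
      · rintro ⟨u, hu, rfl⟩
        have hu0 : (0:ℝ) ≤ u := hu
        exact Set.mem_Ici.2 (Real.one_le_exp (by linarith))
      · intro ht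
        have ht1 : (1:ℝ) ≤ t := ht
        have h0t : (0:ℝ) < t := by linarith
        refine ⟨2 * Real.log t, Set.mem_Ici.2
          (mul_nonneg (by norm_num) (Real.log_nonneg ht1)), ?_⟩
        show Real.exp (2 * Real.log t / 2) = t
        rw [show (2 * Real.log t) / 2 = Real.log t by ring, Real.exp_log h0t]
    have hf' : ∀ u ∈ Set.Ici (0:ℝ), HasDerivWithinAt (fun u : ℝ => Real.exp (u/2))
        (Real.exp (u/2) * (1/2)) (Set.Ici 0) u := by
      intro u _
      exact ((Real.hasDerivAt_exp (u/2)).comp u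
        ((hasDerivAt_id u).div_const 2)).hasDerivWithinAt
    have hinj : Set.InjOn (fun u : ℝ => Real.exp (u/2)) (Set.Ici 0) := by
      intro a _ b _ h
      have := Real.exp_injective h
      linarith [this]
    rw [← himg, my_lintegral_image_eq measurableSet_Ici hf' hinj]
    have hcongr : ∫⁻ u in Set.Ici (0:ℝ),
        ENNReal.ofReal |Real.exp (u/2) * (1/2)|
          * ENNReal.ofReal (P (Real.exp (u/2)) / (Real.exp (u/2)) ^ 3)
        = ∫⁻ u in Set.Ici (0:ℝ), ENNReal.ofReal (1/2 * (1 / B u)) := by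
      refine setLIntegral_congr_fun measurableSet_Ici
        (fun u hu => ?_)
      have hu0 : (0:ℝ) ≤ u := hu
      obtain ⟨hB1, _⟩ := hBfact u hu0
      have he : (0:ℝ) < Real.exp (u/2) := Real.exp_pos _
      have he1 : (1:ℝ) ≤ Real.exp (u/2) := Real.one_le_exp (by linarith)
      rw [hPge _ he1]
      have hsq : Real.exp (u/2) ^ 2 = Real.exp u := by
        rw [sq, ← Real.exp_add]
        congr 1; ring
      have hlog : Real.log (Real.exp (u/2) ^ 2) = u := by
        rw [hsq, Real.log_exp]
      rw [hlog, ← ENNReal.ofReal_mul (abs_nonneg _)]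
      congr 1
      rw [abs_of_pos (by positivity)]
      have hBne : B u ≠ 0 := by linarith
      field_simp
    rw [hcongr]
    have : ∀ u : ℝ, ENNReal.ofReal (1/2 * (1 / B u))
        = ENNReal.ofReal (1/2) * ENNReal.ofReal (1 / B u) := fun u =>
      ENNReal.ofReal_mul (by norm_num)
    simp_rw [this]
    exact lintegral_const_mul' _ _ ENNReal.ofReal_ne_top
  -- Step B : Fubini
  set S : Set (ℝ × ℝ) := {p | p.1 ≤ A p.2} with hSdef
  have hS : MeasurableSet S :=
    (isClosed_le continuous_fst (hAc.comp continuous_snd)).measurableSet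
  set g : ℝ × ℝ → ENNReal := fun p => ENNReal.ofReal (1 / p.2 ^ 2) with hgdef
  have hg : Measurable g := by
    apply Measurable.ennreal_ofReal
    exact measurable_const.div ((measurable_snd.pow_const 2))
  have huncurry : (Function.uncurry fun u t : ℝ => S.indicator g (u, t)) = S.indicator g := by
    ext p; simp [Function.uncurry]
  have hmeas : AEMeasurable (Function.uncurry fun u t : ℝ => S.indicator g (u, t))
      ((volume.restrict (Set.Ici (0:ℝ))).prod (volume.restrict (Set.Ici (1:ℝ)))) := by
    rw [huncurry]
    exact (hg.indicator hS).aemeasurable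
  have swap := lintegral_lintegral_swap hmeas
  have left_eq : (∫⁻ u in Set.Ici (0:ℝ), ∫⁻ t in Set.Ici (1:ℝ), S.indicator g (u, t))
      = ∫⁻ u in Set.Ici (0:ℝ), ENNReal.ofReal (1 / B u) := by
    refine setLIntegral_congr_fun measurableSet_Ici
      (fun u hu => ?_)
    have hu0 : (0:ℝ) ≤ u := hu
    obtain ⟨hB1, _⟩ := hBfact u hu0
    have h1 : ∀ t : ℝ, S.indicator g (u, t)
        = ({t : ℝ | u ≤ A t}).indicator (fun t => ENNReal.ofReal (1/t^2)) t := by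
      intro t
      simp only [Set.indicator_apply, Set.mem_setOf_eq, hSdef, hgdef]
    simp_rw [h1]
    have hms : MeasurableSet {t : ℝ | u ≤ A t} :=
      measurableSet_le measurable_const hAc.measurable
    rw [lintegral_indicator hms, Measure.restrict_restrict hms]
    have hset : {t : ℝ | u ≤ A t} ∩ Set.Ici 1 = Set.Ici (B u) := by
      ext t
      simp only [Set.mem_inter_iff, Set.mem_setOf_eq, Set.mem_Ici]
      constructor
      · rintro ⟨h1t, h2t⟩
        rw [hAeq t h2t] at h1t
        exact (hkey u hu0 t h2t).1 h1t
      · intro h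
        have ht1 : (1:ℝ) ≤ t := le_trans hB1 h
        exact ⟨by rw [hAeq t ht1]; exact (hkey u hu0 t ht1).2 h, ht1⟩
    rw [hset, my_lint_inv_sq (by linarith)]
  have right_eq : (∫⁻ t in Set.Ici (1:ℝ), ∫⁻ u in Set.Ici (0:ℝ), S.indicator g (u, t))
      = ∫⁻ t in Set.Ici (1:ℝ), ENNReal.ofReal (𝒜 t / t ^ 2) := by
    refine setLIntegral_congr_fun measurableSet_Ici
      (fun t ht => ?_)
    have ht1 : (1:ℝ) ≤ t := ht
    have h1 : ∀ u : ℝ, S.indicator g (u, t)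
        = (Set.Iic (A t)).indicator (fun _ : ℝ => ENNReal.ofReal (1/t^2)) u := by
      intro u
      simp only [Set.indicator_apply, Set.mem_setOf_eq, Set.mem_Iic, hSdef, hgdef]
    simp_rw [h1]
    rw [lintegral_indicator measurableSet_Iic, Measure.restrict_restrict measurableSet_Iic,
      setLIntegral_const]
    have hint : Set.Iic (A t) ∩ Set.Ici 0 = Set.Icc 0 (A t) := by
      ext x
      simp only [Set.mem_inter_iff, Set.mem_Iic, Set.mem_Ici, Set.mem_Icc]
      tauto
    rw [hint, Real.volume_Icc, hAeq t ht1, ← ENNReal.ofReal_mul (by positivity)]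
    congr 1
    ring
  have hI : (∫⁻ u in Set.Ici (0:ℝ), ENNReal.ofReal (1 / B u))
      = ∫⁻ t in Set.Ici (1:ℝ), ENNReal.ofReal (𝒜 t / t ^ 2) := by
    rw [← left_eq, swap, right_eq]
  rw [stepA, hI]
  constructor
  · intro h
    rcases ENNReal.mul_eq_top.1 h with ⟨_, h2⟩ | ⟨h2, _⟩
    · exact h2
    · exact absurd h2 ENNReal.ofReal_ne_top
  · intro h
    rw [h, ENNReal.mul_top (by simp)]
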